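/- Let b ≥ 1 be an integer, let 0 < a < 1/b, and let ξ ∈ ℂ be such that exp(2πibt) ≠ ξ^b for every t ∈ [0,a]. Then the change of continuous argument of exp(2πibt) − ξ^b as t runs from 0 to a, namely ind = Im ∫₀^a (2πib·exp(2πibt))/(exp(2πibt) − ξ^b) dt, satisfies ind ≥ π(ba − 1). -/

import Mathlib

open MeasureTheory

lemma im_intervalIntegral (f : ℝ → ℂ) {a b : ℝ} (hf : IntervalIntegrable f volume a b) :
    (∫ t in a..b, f t).im = ∫ t in a..b, (f t).im := by
  simp only [intervalIntegral]
  have h1 : ∫ x in Set.Ioc a b, (f x).im ∂volume = (∫ x in Set.Ioc a b, f x ∂volume).im :=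
    integral_im hf.1
  have h2 : ∫ x in Set.Ioc b a, (f x).im ∂volume = (∫ x in Set.Ioc b a, f x ∂volume).im :=
    integral_im hf.2
  rw [Complex.sub_im, h1, h2]

lemma half_le_re_div {z w : ℂ} (hz : ‖z‖ = 1) (hw : ‖w‖ ≤ 1) (h : z ≠ w) :
    (1:ℝ)/2 ≤ (z / (z - w)).re := by
  have h1 : Complex.normSq z = 1 := by rw [← Complex.sq_norm, hz]; norm_num
  have h2 : Complex.normSq w ≤ 1 := by
    rw [← Complex.sq_norm]; nlinarith [norm_nonneg w]
  have hd : 0 < Complex.normSq (z - w) := Complex.normSq_pos.mpr (sub_ne_zero.mpr h)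
  rw [Complex.div_re, ← add_div, le_div_iff₀ hd]
  simp only [Complex.normSq_apply, Complex.sub_re, Complex.sub_im] at *
  nlinarith

lemma re_div_le_half {z w : ℂ} (hz : ‖z‖ = 1) (hw : 1 ≤ ‖w‖) (h : z ≠ w) :
    (z / (z - w)).re ≤ (1:ℝ)/2 := by
  have h1 : Complex.normSq z = 1 := by rw [← Complex.sq_norm, hz]; norm_num
  have h2 : 1 ≤ Complex.normSq w := by
    rw [← Complex.sq_norm]; nlinarith [norm_nonneg w]
  have hd : 0 < Complex.normSq (z - w) := Complex.normSq_pos.mpr (sub_ne_zero.mpr h)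
  rw [Complex.div_re, ← add_div, div_le_iff₀ hd]
  simp only [Complex.normSq_apply, Complex.sub_re, Complex.sub_im] at *
  nlinarith

lemma im_coeff_mul (r : ℝ) (z w : ℂ) :
    ((r : ℂ) * Complex.I * z / (z - w)).im = r * (z / (z - w)).re := by
  rw [mul_div_assoc]
  simp [Complex.mul_im, Complex.mul_re]

theorem index_b_roots_lower_bound
    (b : ℕ) (hb : 1 ≤ b) (a : ℝ) (ha0 : 0 < a) (ha1 : a < 1 / b) (ξ : ℂ)
    (hξ : ∀ t ∈ Set.Icc (0 : ℝ) a,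
      Complex.exp (2 * Real.pi * Complex.I * (b : ℂ) * (t : ℂ)) ≠ ξ ^ b) :
    Real.pi * ((b : ℝ) * a - 1) ≤
      (∫ t in (0 : ℝ)..a,
        (2 * Real.pi * (b : ℂ) * Complex.I *
            Complex.exp (2 * Real.pi * Complex.I * (b : ℂ) * (t : ℂ))) /
          (Complex.exp (2 * Real.pi * Complex.I * (b : ℂ) * (t : ℂ)) - ξ ^ b)).im := by
  have hbR : (0:ℝ) < (b:ℝ) := by exact_mod_cast hb
  have hbC : ((b:ℕ):ℂ) ≠ 0 := Nat.cast_ne_zero.mpr (by omega)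
  set k : ℂ := 2 * (Real.pi : ℂ) * Complex.I * (b : ℂ) with hk
  set w : ℂ := ξ ^ b with hwdef
  set φ : ℝ → ℂ := fun t =>
    (2 * (Real.pi:ℂ) * (b : ℂ) * Complex.I * Complex.exp (k * (t:ℂ))) /
      (Complex.exp (k * (t:ℂ)) - w) with hφ
  show Real.pi * ((b : ℝ) * a - 1) ≤ (∫ t in (0:ℝ)..a, φ t).im
  -- basic facts
  have habs : ∀ t : ℝ, ‖Complex.exp (k * (t:ℂ))‖ = 1 := by
    intro t
    rw [Complex.norm_exp]
    have : (k * (t:ℂ)).re = 0 := by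
      simp [hk, Complex.mul_re, Complex.mul_im]
    rw [this, Real.exp_zero]
  have hcontexp : Continuous fun t : ℝ => Complex.exp (k * (t:ℂ)) :=
    Complex.continuous_exp.comp (continuous_const.mul Complex.continuous_ofReal)
  have hderiv : ∀ t : ℝ, HasDerivAt (fun s : ℝ => Complex.exp (k * (s:ℂ)))
      (k * Complex.exp (k * (t:ℂ))) t := by
    intro t
    have h1 : HasDerivAt (fun s : ℝ => k * (s:ℂ)) k t := by
      simpa using (Complex.ofRealCLM.hasDerivAt (x := t)).const_mul k
    simpa [mul_comm] using h1.cexp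
  have him : ∀ t : ℝ, Complex.exp (k * (t:ℂ)) ≠ w → (φ t).im =
      2 * Real.pi * (b:ℝ) * (Complex.exp (k * (t:ℂ)) / (Complex.exp (k * (t:ℂ)) - w)).re := by
    intro t _
    have : φ t = (((2 * Real.pi * (b:ℝ) : ℝ)) : ℂ) * Complex.I *
        Complex.exp (k * (t:ℂ)) / (Complex.exp (k * (t:ℂ)) - w) := by
      simp only [hφ]; push_cast; ring_nf
    rw [this, im_coeff_mul]
  rcases le_or_gt (‖w‖) 1 with hw | hw
  · -- |w| ≤ 1 : pointwise lower bound on [0, a]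
    have hne : ∀ t ∈ Set.Icc (0:ℝ) a, Complex.exp (k * (t:ℂ)) - w ≠ 0 := by
      intro t ht
      exact sub_ne_zero.mpr (hξ t ht)
    have hcont : ContinuousOn φ (Set.Icc 0 a) := by
      apply ContinuousOn.div
      · exact (continuous_const.mul hcontexp).continuousOn
      · exact (hcontexp.sub continuous_const).continuousOn
      · exact hne
    have hint : IntervalIntegrable φ volume 0 a :=
      hcont.intervalIntegrable_of_Icc ha0.le
    have hintim : IntervalIntegrable (fun t => (φ t).im) volume 0 a :=
      (Complex.continuous_im.comp_continuousOn hcont).intervalIntegrable_of_Icc ha0.le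
    rw [im_intervalIntegral φ hint]
    have hpt : ∀ t ∈ Set.Icc (0:ℝ) a, Real.pi * (b:ℝ) ≤ (φ t).im := by
      intro t ht
      have hzw : Complex.exp (k * (t:ℂ)) ≠ w := hξ t ht
      rw [him t hzw]
      have := half_le_re_div (habs t) hw hzw
      nlinarith [mul_le_mul_of_nonneg_left this
        (by positivity : (0:ℝ) ≤ 2 * Real.pi * (b:ℝ))]
    have hlow : ∫ t in (0:ℝ)..a, (Real.pi * (b:ℝ)) ≤ ∫ t in (0:ℝ)..a, (φ t).im :=
      intervalIntegral.integral_mono_on ha0.le intervalIntegrable_const hintim hpt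
    have hconst : ∫ t in (0:ℝ)..a, (Real.pi * (b:ℝ)) = a * (Real.pi * (b:ℝ)) := by
      rw [intervalIntegral.integral_const, smul_eq_mul]; ring
    nlinarith [Real.pi_pos]
  · -- 1 < |w|
    have hwne : w ≠ 0 := by
      intro h0; rw [h0] at hw; simp at hw; linarith
    have hne : ∀ t : ℝ, Complex.exp (k * (t:ℂ)) - w ≠ 0 := by
      intro t h0
      have := habs t
      rw [sub_eq_zero.mp h0] at this
      linarith
    have hcont : Continuous φ := by
      apply Continuous.div
      · exact continuous_const.mul hcontexp
      · exact hcontexp.sub continuous_const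
      · exact hne
    set h : ℝ → ℂ := fun t => (Complex.exp (k * (t:ℂ)) - w) * (-(starRingEnd ℂ) w) with hhdef
    have hre : ∀ t : ℝ, 0 < (h t).re := by
      intro t
      have hexp : h t = -(Complex.exp (k * (t:ℂ)) * (starRingEnd ℂ) w) + (Complex.normSq w : ℂ) := by
        simp only [hhdef]
        rw [← Complex.mul_conj]
        ring
      rw [hexp]
      have h1 : (Complex.exp (k * (t:ℂ)) * (starRingEnd ℂ) w).re ≤ ‖w‖ := by
        calc (Complex.exp (k * (t:ℂ)) * (starRingEnd ℂ) w).re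
            ≤ ‖Complex.exp (k * (t:ℂ)) * (starRingEnd ℂ) w‖ := Complex.re_le_norm _
          _ = ‖w‖ := by rw [norm_mul, habs t, Complex.norm_conj, one_mul]
      have h2 : Complex.normSq w = ‖w‖ ^ 2 := (Complex.sq_norm w).symm
      simp only [Complex.add_re, Complex.neg_re, Complex.ofReal_re]
      nlinarith
    have hF : ∀ t : ℝ, HasDerivAt (fun s => Complex.log (h s)) (φ t) t := by
      intro t
      have hd : HasDerivAt h (k * Complex.exp (k * (t:ℂ)) * (-(starRingEnd ℂ) w)) t :=
        ((hderiv t).sub_const w).mul_const _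
      have hmem : h t ∈ Complex.slitPlane := Complex.mem_slitPlane_iff.mpr (Or.inl (hre t))
      have := hd.clog_real hmem
      convert this using 1
      simp only [hφ, hhdef]
      rw [mul_div_mul_right _ _ (neg_ne_zero.mpr (by simpa using hwne))]
      rw [hk]
      ring
    have hint : ∀ u v : ℝ, IntervalIntegrable φ volume u v :=
      fun u v => hcont.intervalIntegrable u v
    have hfull : ∫ t in (0:ℝ)..(1/(b:ℝ)), φ t = 0 := by
      rw [intervalIntegral.integral_eq_sub_of_hasDerivAt (fun t _ => hF t) (hint _ _)]
      have hkey : h (1/(b:ℝ)) = h 0 := by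
        have e1 : k * (((1/(b:ℝ)):ℝ):ℂ) = 2 * (Real.pi:ℂ) * Complex.I := by
          rw [hk]; push_cast; field_simp
        have e2 : k * ((0:ℝ):ℂ) = 0 := by simp
        rw [hhdef]
        simp only [e1, e2, Complex.exp_zero]
        rw [Complex.exp_two_pi_mul_I]
      rw [hkey, sub_self]
    have hsplit : (∫ t in (0:ℝ)..a, φ t) + (∫ t in a..(1/(b:ℝ)), φ t) = 0 := by
      rw [intervalIntegral.integral_add_adjacent_intervals (hint _ _) (hint _ _), hfull]
    have himineq : (∫ t in a..(1/(b:ℝ)), φ t).im ≤ Real.pi * (1 - (b:ℝ) * a) := by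
      rw [im_intervalIntegral φ (hint _ _)]
      have hintim : IntervalIntegrable (fun t => (φ t).im) volume a (1/(b:ℝ)) :=
        (Complex.continuous_im.comp hcont).intervalIntegrable _ _
      have hpt : ∀ t ∈ Set.Icc a (1/(b:ℝ)), (φ t).im ≤ Real.pi * (b:ℝ) := by
        intro t ht
        have hzw : Complex.exp (k * (t:ℂ)) ≠ w := fun h0 => hne t (by rw [h0, sub_self])
        rw [him t hzw]
        have := re_div_le_half (habs t) hw.le hzw
        nlinarith [mul_le_mul_of_nonneg_left this
          (by positivity : (0:ℝ) ≤ 2 * Real.pi * (b:ℝ))]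
      have hup : ∫ t in a..(1/(b:ℝ)), (φ t).im ≤ ∫ t in a..(1/(b:ℝ)), (Real.pi * (b:ℝ)) :=
        intervalIntegral.integral_mono_on ha1.le hintim intervalIntegrable_const hpt
      have hconst : ∫ t in a..(1/(b:ℝ)), (Real.pi * (b:ℝ))
          = (1/(b:ℝ) - a) * (Real.pi * (b:ℝ)) := by
        rw [intervalIntegral.integral_const, smul_eq_mul]
      rw [hconst] at hup
      calc ∫ t in a..(1/(b:ℝ)), (φ t).im ≤ (1/(b:ℝ) - a) * (Real.pi * (b:ℝ)) := hup
        _ = Real.pi * (1 - (b:ℝ) * a) := by field_simp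
    have heq : (∫ t in (0:ℝ)..a, φ t).im = -((∫ t in a..(1/(b:ℝ)), φ t).im) := by
      have := congrArg Complex.im hsplit
      simp only [Complex.add_im, Complex.zero_im] at this
      linarith
    rw [heq]
    linarith
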